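/- Let (Ω, ℱ, P) be a probability space, X : Ω → ℝ^m and Y : Ω → ℝ random variables, and δ : Ω → {0,1} a random indicator. Suppose E[δ | X, Y] = π(X) almost surely for some measurable function π : ℝ^m → [0,1] (the missing-at-random assumption), and suppose e = g(X,Y) for some measurable g : ℝ^m × ℝ → ℝ is a random variable independent of X. Then for every bounded measurable function h : ℝ → ℝ one has E[δ h(e)] = E[δ] · E[h(e)]. -/

import Mathlib

open MeasureTheory ProbabilityTheory

/-- Under the missing-at-random assumption `E[δ | X, Y] = π(X)` a.s. and independence of the
error `e = g(X, Y)` from the covariate `X`, for every bounded measurable `h : ℝ → ℝ` one has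
`E[δ h(e)] = E[δ] ⬝ E[h(e)]`. -/
theorem expectation_delta_mul_of_MAR
    {Ω : Type*} [MeasurableSpace Ω] (P : Measure Ω) [IsProbabilityMeasure P]
    {m : ℕ} (X : Ω → (Fin m → ℝ)) (Y : Ω → ℝ) (δ : Ω → ℝ)
    (hX : Measurable X) (hY : Measurable Y) (hδ : Measurable δ)
    (hδ01 : ∀ ω, δ ω = 0 ∨ δ ω = 1)
    (π : (Fin m → ℝ) → ℝ) (hπ : Measurable π)
    (hπ01 : ∀ x, π x ∈ Set.Icc (0 : ℝ) 1)
    (hMAR : P[δ | MeasurableSpace.comap (fun ω => (X ω, Y ω)) inferInstance]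
      =ᵐ[P] fun ω => π (X ω))
    (g : (Fin m → ℝ) × ℝ → ℝ) (hg : Measurable g)
    (e : Ω → ℝ) (he : ∀ ω, e ω = g (X ω, Y ω))
    (hindep : IndepFun e X P)
    (h : ℝ → ℝ) (hh : Measurable h) (hbd : ∃ C, ∀ x, |h x| ≤ C) :
    ∫ ω, δ ω * h (e ω) ∂P = (∫ ω, δ ω ∂P) * ∫ ω, h (e ω) ∂P := by
  obtain ⟨C, hC⟩ := hbd
  -- basic measurability and integrability facts (w.r.t. the ambient σ-algebra)
  have hδbd : ∀ ω, |δ ω| ≤ 1 := by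
    intro ω; rcases hδ01 ω with h' | h' <;> simp [h']
  have hδint : Integrable δ P := by
    refine (integrable_const (1 : ℝ)).mono' hδ.aestronglyMeasurable ?_
    filter_upwards with ω using by simpa using hδbd ω
  have hgeM : Measurable (fun ω => h (e ω)) := by
    have heq : (fun ω => h (e ω)) = fun ω => h (g (X ω, Y ω)) := by
      funext ω; rw [he]
    rw [heq]; exact hh.comp (hg.comp (hX.prodMk hY))
  have hheint : Integrable (fun ω => h (e ω)) P := by
    refine (integrable_const C).mono' hgeM.aestronglyMeasurable ?_
    filter_upwards with ω using by simpa using hC (e ω)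
  have hprodint : Integrable (fun ω => h (e ω) * δ ω) P := by
    refine (integrable_const C).mono' ((hgeM.mul hδ).aestronglyMeasurable) ?_
    filter_upwards with ω
    calc ‖h (e ω) * δ ω‖ = |h (e ω)| * |δ ω| := abs_mul _ _
      _ ≤ C * 1 := mul_le_mul (hC _) (hδbd _) (abs_nonneg _)
          ((abs_nonneg _).trans (hC (e ω)))
      _ = C := mul_one C
  have hπint : Integrable (fun ω => π (X ω)) P := by
    refine (integrable_const (1 : ℝ)).mono' (hπ.comp hX).aestronglyMeasurable ?_
    filter_upwards with ω
    have := hπ01 (X ω)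
    simpa [abs_of_nonneg this.1] using this.2
  have hindep2 : IndepFun (fun ω => h (e ω)) (fun ω => π (X ω)) P := hindep.comp hh hπ
  have hle := (hX.prodMk hY).comap_le
  set mS : MeasurableSpace Ω := MeasurableSpace.comap (fun ω => (X ω, Y ω)) inferInstance
    with hmS
  have hkey : Measurable[mS] fun ω : Ω => (X ω, Y ω) := measurable_iff_comap_le.mpr le_rfl
  have hhe_meas : Measurable[mS] fun ω => h (e ω) := by
    have := (hh.comp hg).comp hkey
    simpa [Function.comp_def, he] using this
  -- pull-out property of conditional expectation
  have hpull : P[(fun ω => h (e ω)) * δ | mS]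
      =ᵐ[P] (fun ω => h (e ω)) * P[δ | mS] :=
    condExp_mul_of_stronglyMeasurable_left hhe_meas.stronglyMeasurable hprodint hδint
  have step1 : ∫ ω, δ ω * h (e ω) ∂P = ∫ ω, h (e ω) * π (X ω) ∂P := by
    have key : ∫ ω, h (e ω) * δ ω ∂P = ∫ ω, (P[(fun ω => h (e ω)) * δ | mS]) ω ∂P := by
      have := integral_condExp (μ := P) (f := (fun ω => h (e ω)) * δ) hle
      simp only [Pi.mul_apply] at this
      exact this.symm
    calc ∫ ω, δ ω * h (e ω) ∂P = ∫ ω, h (e ω) * δ ω ∂P := by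
          simp_rw [mul_comm]
      _ = ∫ ω, (P[(fun ω => h (e ω)) * δ | mS]) ω ∂P := key
      _ = ∫ ω, h (e ω) * π (X ω) ∂P := by
          refine integral_congr_ae (hpull.trans ?_)
          filter_upwards [hMAR] with ω hω
          simp [hω]
  have step2 : ∫ ω, h (e ω) * π (X ω) ∂P
      = (∫ ω, h (e ω) ∂P) * ∫ ω, π (X ω) ∂P :=
    hindep2.integral_fun_mul_eq_mul_integral hheint.aestronglyMeasurable hπint.aestronglyMeasurable
  have step3 : ∫ ω, δ ω ∂P = ∫ ω, π (X ω) ∂P := by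
    calc ∫ ω, δ ω ∂P = ∫ ω, (P[δ | mS]) ω ∂P :=
          (integral_condExp (μ := P) (f := δ) hle).symm
      _ = ∫ ω, π (X ω) ∂P := integral_congr_ae hMAR
  rw [step1, step2, step3, mul_comm]
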